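/- Let r ≥ 2, k ≥ 1, ω = e^{2πi/r^{k+1}}, and let u be the Chu sequence of length r^{k+1} (for r even: u_n = e^{πi n²/r}). The Milewski sequence s of length r^{2k+1}, defined by s_{q·r^k + j} = u_{q mod r^{k+1}} · ω^{qj} for 0 ≤ q < r^{k+1}, 0 ≤ j < r^k, is perfect: all off-peak periodic autocorrelations of s (of period r^{2k+1}) are zero. -/

import Mathlib

open Finset Complex

noncomputable def psi (L : ℕ) : ℂ := Complex.exp (Real.pi * Complex.I / L)

lemma psi_ne_zero (L : ℕ) : psi L ≠ 0 := Complex.exp_ne_zero _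

lemma psi_zpow (L : ℕ) (m : ℤ) :
    psi L ^ m = Complex.exp (m * (Real.pi * Complex.I / L)) := by
  rw [psi, ← Complex.exp_int_mul]

lemma psi_zpow_eq_one (L : ℕ) (hL : 0 < L) (m : ℤ) :
    psi L ^ m = 1 ↔ (2 * L : ℤ) ∣ m := by
  rw [psi_zpow, Complex.exp_eq_one_iff]
  have hLC : (L : ℂ) ≠ 0 := Nat.cast_ne_zero.2 hL.ne'
  have hpi : (Real.pi : ℂ) * Complex.I ≠ 0 :=
    mul_ne_zero (Complex.ofReal_ne_zero.2 Real.pi_ne_zero) Complex.I_ne_zero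
  constructor
  · rintro ⟨n, hn⟩
    refine ⟨n, ?_⟩
    have h2 : (m : ℂ) * (Real.pi * Complex.I) = ((2 * L) * n) * (Real.pi * Complex.I) := by
      field_simp at hn
      linear_combination (Real.pi * Complex.I) * hn
    have h3 : (m : ℂ) = ((2 * (L:ℤ)) * n : ℤ) := by
      push_cast
      exact mul_right_cancel₀ hpi h2
    exact_mod_cast h3
  · rintro ⟨c, rfl⟩
    refine ⟨c, ?_⟩
    push_cast
    field_simp

lemma conj_psi_zpow (L : ℕ) (m : ℤ) :
    (starRingEnd ℂ) (psi L ^ m) = psi L ^ (-m) := by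
  rw [map_zpow₀, psi, ← Complex.exp_conj]
  have h : (starRingEnd ℂ) (Real.pi * Complex.I / L) = -(Real.pi * Complex.I / L) := by
    simp [div_eq_mul_inv, map_mul, Complex.conj_I]
  rw [h, Complex.exp_neg, ← psi, inv_zpow, ← zpow_neg]

lemma psi_zpow_congr (L : ℕ) (hL : 0 < L) (m m' : ℤ) (h : (2 * L : ℤ) ∣ m - m') :
    psi L ^ m = psi L ^ m' := by
  have : psi L ^ m = psi L ^ m' * psi L ^ (m - m') := by
    rw [← zpow_add₀ (psi_ne_zero L)]; ring_nf
  rw [this, (psi_zpow_eq_one L hL (m - m')).2 h, mul_one]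

lemma key_congr (L rk : ℕ) (hL : 0 < L) (hrk2 : (2:ℤ) ∣ rk)
    (m m' j : ℤ) (h : (L:ℤ) ∣ (m - m')) :
    psi L ^ (m^2 * rk + 2*m*j) = psi L ^ (m'^2 * rk + 2*m'*j) := by
  apply psi_zpow_congr L hL
  obtain ⟨c, hc⟩ := h
  obtain ⟨s, hs⟩ := hrk2
  exact ⟨c*(m+m')*s + c*j, by linear_combination ((m+m')*(rk:ℤ)+2*j) * hc + (L:ℤ)*c*(m+m') * hs⟩

lemma geom_zero {z : ℂ} (n : ℕ) (h1 : z ^ n = 1) (h2 : z ≠ 1) :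
    ∑ i ∈ range n, z ^ i = 0 := by
  rw [geom_sum_eq h2, h1]; simp

lemma sum_range_mul {β : Type*} [AddCommMonoid β] (L M : ℕ) (f : ℕ → β) :
    ∑ t ∈ range (L * M), f t = ∑ q ∈ range L, ∑ j ∈ range M, f (q * M + j) := by
  induction L with
  | zero => simp
  | succ n ih =>
    rw [Finset.sum_range_succ, ← ih, Nat.succ_mul, Finset.sum_range_add]

lemma mod_helper (L M Q c : ℕ) (hL : 0 < L) (hM : 0 < M) (hc : c < M) :
    (Q * M + c) % (L * M) = Q % L * M + c := by
  have h1 : Q * M + c = (Q / L) * (L * M) + (Q % L * M + c) := by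
    nlinarith [Nat.div_add_mod Q L]
  have h2 : Q % L * M + c < L * M := by
    have h3 : Q % L < L := Nat.mod_lt _ hL
    calc Q % L * M + c < (Q % L + 1) * M := by rw [add_mul, one_mul]; omega
    _ ≤ L * M := Nat.mul_le_mul_right M h3
  rw [h1, mul_comm (Q/L) (L*M), Nat.mul_add_mod, Nat.mod_eq_of_lt h2]

/-- Milewski sequences are perfect: for `r` even, the sequence of length `r^{2k+1}`
given by `s_{q·r^k + j} = u_q · ω^{qj}` (with `u_n = e^{πi n²/r}` the Chu sequence of
length `r^{k+1}` and `ω = e^{2πi/r^{k+1}}`) has all off-peak periodic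
autocorrelations equal to zero. -/
theorem milewski_sequence_perfect (r k : ℕ) (hr : Even r) (hr0 : 0 < r) (hk : 1 ≤ k) :
    ∀ τ : ℕ, ¬ r ^ (2 * k + 1) ∣ τ →
      ∑ t ∈ range (r ^ (2 * k + 1)),
        (Complex.exp (Real.pi * Complex.I * (((t / r ^ k) % r ^ (k + 1) : ℕ) : ℂ) ^ 2 / r) *
            Complex.exp (2 * Real.pi * Complex.I / (r ^ (k + 1) : ℕ)) ^
              ((t / r ^ k) * (t % r ^ k))) *
          (starRingEnd ℂ)
            (Complex.exp (Real.pi * Complex.I *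
                (((((t + τ) % r ^ (2 * k + 1)) / r ^ k) % r ^ (k + 1) : ℕ) : ℂ) ^ 2 / r) *
              Complex.exp (2 * Real.pi * Complex.I / (r ^ (k + 1) : ℕ)) ^
                ((((t + τ) % r ^ (2 * k + 1)) / r ^ k) * (((t + τ) % r ^ (2 * k + 1)) % r ^ k))) = 0 := by
  intro τ hτ
  set M := r ^ k with hMdef
  set L := r ^ (k + 1) with hLdef
  have hM : 0 < M := pow_pos hr0 k
  have hL : 0 < L := pow_pos hr0 (k + 1)
  have hLM : L = M * r := by rw [hLdef, hMdef, pow_succ]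
  have hN : r ^ (2 * k + 1) = L * M := by
    rw [hLdef, hMdef, ← pow_add]; congr 1; omega
  rw [hN] at hτ ⊢
  have hNpos : 0 < L * M := Nat.mul_pos hL hM
  set τ' := τ % (L * M) with hτ'def
  have hτ'N : τ' < L * M := Nat.mod_lt _ hNpos
  have hτ'0 : τ' ≠ 0 := fun h => hτ (Nat.dvd_of_mod_eq_zero h)
  set a := τ' / M with hadef
  set b := τ' % M with hbdef
  have hab : τ' = a * M + b := by
    rw [hadef, hbdef, mul_comm (τ' / M) M]; exact (Nat.div_add_mod τ' M).symm
  have hb : b < M := Nat.mod_lt _ hM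
  have ha : a < L := by
    rw [hadef]
    exact (Nat.div_lt_iff_lt_mul hM).2 hτ'N
  set ψ := psi L with hψdef
  have hψ0 : ψ ≠ 0 := psi_ne_zero L
  obtain ⟨s, hs⟩ : ∃ s : ℤ, (M : ℤ) = 2 * s := by
    have h2 : 2 ∣ M := dvd_trans hr.two_dvd (dvd_pow_self r (by omega : k ≠ 0))
    obtain ⟨s, hs⟩ := h2
    exact ⟨(s : ℤ), by exact_mod_cast hs⟩
  have hrC : (r : ℂ) ≠ 0 := Nat.cast_ne_zero.2 hr0.ne'
  have hMC : (M : ℂ) ≠ 0 := Nat.cast_ne_zero.2 hM.ne'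
  have hLC : (L : ℂ) = (M : ℂ) * r := by rw [hLM]; push_cast; ring
  have hLZ : (L : ℤ) = (M : ℤ) * r := by exact_mod_cast hLM
  -- conversions to ψ powers
  have hexp : ∀ n : ℕ, Complex.exp (Real.pi * Complex.I * (n : ℂ) ^ 2 / r)
      = ψ ^ ((n : ℤ) ^ 2 * M) := by
    intro n
    rw [hψdef, psi_zpow]
    congr 1
    rw [hLC]
    push_cast
    field_simp
  have homega : ∀ m : ℕ, Complex.exp (2 * Real.pi * Complex.I / (L : ℕ)) ^ m
      = ψ ^ (2 * (m : ℤ)) := by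
    intro m
    rw [← Complex.exp_nat_mul, hψdef, psi_zpow]
    congr 1
    push_cast
    ring
  have hconj : ∀ m : ℤ, (starRingEnd ℂ) (ψ ^ m) = ψ ^ (-m) := by
    rw [hψdef]; exact conj_psi_zpow L
  have hone : ∀ m : ℤ, (ψ ^ m = 1 ↔ (2 * (L:ℤ)) ∣ m) := by
    rw [hψdef]; exact psi_zpow_eq_one L hL
  have hcongrψ : ∀ m m' : ℤ, (2 * (L:ℤ)) ∣ m - m' → ψ ^ m = ψ ^ m' := by
    rw [hψdef]; exact psi_zpow_congr L hL
  -- reduce τ to τ' inside the mod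
  have hmodτ : ∀ t : ℕ, (t + τ) % (L * M) = (t + τ') % (L * M) := by
    intro t
    rw [hτ'def, Nat.add_mod t τ, Nat.add_mod t (τ % (L * M)),
      Nat.mod_mod_of_dvd τ dvd_rfl]
  -- div/mod facts
  have hdm : ∀ Q c : ℕ, c < M → (Q * M + c) / M = Q ∧ (Q * M + c) % M = c := by
    intro Q c hc
    constructor
    · rw [add_comm, mul_comm, Nat.add_mul_div_left _ _ hM, Nat.div_eq_of_lt hc, zero_add]
    · rw [add_comm, mul_comm, Nat.add_mul_mod_self_left, Nat.mod_eq_of_lt hc]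
  set z : ℂ := ψ ^ (-(2 * (τ' : ℤ))) with hzdef
  set w : ℕ → ℂ := fun j => if j + b < M then ψ ^ (-((a:ℤ)^2 * M) - 2 * a * ((j:ℤ) + b))
      else ψ ^ (-(((a:ℤ)+1)^2 * M) - 2 * ((a:ℤ)+1) * ((j:ℤ) + b - M)) with hwdef
  have hzq : ∀ q : ℕ, z ^ q = ψ ^ (-(2 * (τ' : ℤ)) * q) := by
    intro q; rw [hzdef, ← zpow_natCast (ψ ^ _), ← zpow_mul]
  have habZ : (τ' : ℤ) = a * M + b := by exact_mod_cast hab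
  -- the main factorization
  have hkey : ∑ t ∈ range (L * M),
      (Complex.exp (Real.pi * Complex.I * (((t / M) % L : ℕ) : ℂ) ^ 2 / r) *
          Complex.exp (2 * Real.pi * Complex.I / (L : ℕ)) ^ ((t / M) * (t % M))) *
        (starRingEnd ℂ)
          (Complex.exp (Real.pi * Complex.I *
              (((((t + τ) % (L * M)) / M) % L : ℕ) : ℂ) ^ 2 / r) *
            Complex.exp (2 * Real.pi * Complex.I / (L : ℕ)) ^
              ((((t + τ) % (L * M)) / M) * (((t + τ) % (L * M)) % M)))
      = (∑ q ∈ range L, z ^ q) * (∑ j ∈ range M, w j) := by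
    rw [sum_range_mul L M, Finset.sum_mul_sum]
    apply Finset.sum_congr rfl
    intro q hq
    apply Finset.sum_congr rfl
    intro j hj
    rw [Finset.mem_range] at hq hj
    have h1 := (hdm q j hj).1
    have h2 := (hdm q j hj).2
    rw [hmodτ, h1, h2, Nat.mod_eq_of_lt hq]
    by_cases hcase : j + b < M
    · -- no carry
      have heq : q * M + j + τ' = (q + a) * M + (j + b) := by
        rw [hab]; ring
      have hTm : (q * M + j + τ') % (L * M) = ((q + a) % L) * M + (j + b) := by
        rw [heq]; exact mod_helper L M (q + a) (j + b) hL hM hcase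
      set n := (q + a) % L with hndef
      have hn : n < L := Nat.mod_lt _ hL
      have h3 := (hdm n (j + b) hcase).1
      have h4 := (hdm n (j + b) hcase).2
      rw [hTm, h3, h4, Nat.mod_eq_of_lt hn, hexp, hexp, homega, homega,
        ← zpow_add₀ hψ0, ← zpow_add₀ hψ0, hconj, ← zpow_add₀ hψ0, hzq]
      simp only [hwdef]
      rw [if_pos hcase, ← zpow_add₀ hψ0]
      apply hcongrψ
      set d := (q + a) / L with hddef
      have hnZ : (n : ℤ) = (q : ℤ) + a - L * d := by
        have h5 : n + L * d = q + a := by rw [hndef, hddef]; exact Nat.mod_add_div _ _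
        have h6 : (n : ℤ) + (L : ℤ) * (d : ℤ) = (q : ℤ) + (a : ℤ) := by exact_mod_cast h5
        linarith
      refine ⟨2 * ((q:ℤ) + a) * d * s - (L:ℤ) * d^2 * s + d * ((j:ℤ) + b), ?_⟩
      push_cast
      rw [hnZ, habZ, hs]
      ring
    · -- carry
      push_neg at hcase
      have heq : q * M + j + τ' = (q + a + 1) * M + (j + b - M) := by
        rw [hab]
        have h5 : (q + a + 1) * M = q * M + a * M + M := by ring
        omega
      have hc2 : j + b - M < M := by omega
      have hTm : (q * M + j + τ') % (L * M) = ((q + a + 1) % L) * M + (j + b - M) := by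
        rw [heq]; exact mod_helper L M (q + a + 1) (j + b - M) hL hM hc2
      set n := (q + a + 1) % L with hndef
      have hn : n < L := Nat.mod_lt _ hL
      have h3 := (hdm n (j + b - M) hc2).1
      have h4 := (hdm n (j + b - M) hc2).2
      rw [hTm, h3, h4, Nat.mod_eq_of_lt hn, hexp, hexp, homega, homega,
        ← zpow_add₀ hψ0, ← zpow_add₀ hψ0, hconj, ← zpow_add₀ hψ0, hzq]
      simp only [hwdef]
      rw [if_neg (not_lt.2 hcase), ← zpow_add₀ hψ0]
      apply hcongrψ
      set d := (q + a + 1) / L with hddef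
      have hnZ : (n : ℤ) = (q : ℤ) + a + 1 - L * d := by
        have h5 : n + L * d = q + a + 1 := by rw [hndef, hddef]; exact Nat.mod_add_div _ _
        have h6 : (n : ℤ) + (L : ℤ) * (d : ℤ) = (q : ℤ) + (a : ℤ) + 1 := by exact_mod_cast h5
        linarith
      refine ⟨2 * ((q:ℤ) + a + 1) * d * s - (L:ℤ) * d^2 * s + d * ((j:ℤ) + b - M), ?_⟩
      push_cast [Nat.cast_sub hcase]
      rw [hnZ, habZ, hs]
      ring
  rw [hkey]
  by_cases hdvd : L ∣ τ'
  · -- right factor vanishes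
    have hbz : b = 0 := by
      have hMd : M ∣ τ' := dvd_trans ⟨r, hLM⟩ hdvd
      rw [hbdef]
      exact Nat.dvd_iff_mod_eq_zero.1 hMd
    have ha0 : a ≠ 0 := by
      intro h; apply hτ'0; rw [hab, h, hbz]; ring
    have hra : r ∣ a := by
      have h6 : τ' = a * M := by rw [hab, hbz]; ring
      have h7 : r * M ∣ a * M := by
        rw [← h6]
        calc r * M = L := by rw [hLM]; ring
        _ ∣ τ' := hdvd
      exact (Nat.mul_dvd_mul_iff_right hM).1 h7
    obtain ⟨a', ha'⟩ := hra
    have haZ : (a : ℤ) = r * a' := by exact_mod_cast ha'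
    have ha'0 : 0 < a' := by
      rcases Nat.eq_zero_or_pos a' with h | h
      · exfalso; apply ha0; rw [ha', h, mul_zero]
      · exact h
    have hwsum : ∑ j ∈ range M, w j = 0 := by
      have hwj : ∀ j ∈ range M, w j = ψ ^ (-((a:ℤ)^2 * M)) * (ψ ^ (-(2 * (a:ℤ)))) ^ j := by
        intro j hj
        rw [Finset.mem_range] at hj
        simp only [hwdef]
        rw [if_pos (by omega : j + b < M)]
        rw [← zpow_natCast (ψ ^ (-(2 * (a:ℤ)))), ← zpow_mul, ← zpow_add₀ hψ0]
        congr 1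
        rw [hbz]
        push_cast
        ring
      rw [Finset.sum_congr rfl hwj, ← Finset.mul_sum]
      have hy1 : (ψ ^ (-(2 * (a:ℤ)))) ^ M = 1 := by
        rw [← zpow_natCast (ψ ^ _), ← zpow_mul, hone]
        refine ⟨-(a' : ℤ), ?_⟩
        rw [haZ, hLZ]; ring
      have hy2 : ψ ^ (-(2 * (a:ℤ))) ≠ 1 := by
        intro h
        rw [hone] at h
        obtain ⟨c, hc⟩ := h
        have h8 : (2:ℤ) * (-(a:ℤ)) = 2 * ((L:ℤ) * c) := by linarith
        have h9 : -(a:ℤ) = (L:ℤ) * c := mul_left_cancel₀ two_ne_zero h8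
        have hLa : (L : ℤ) ∣ (a : ℤ) := ⟨-c, by rw [mul_neg, ← h9, neg_neg]⟩
        have hLa' : L ∣ a := Int.ofNat_dvd.1 hLa
        have := Nat.le_of_dvd (Nat.pos_of_ne_zero ha0) hLa'
        omega
      rw [geom_zero M hy1 hy2, mul_zero]
    rw [hwsum, mul_zero]
  · -- left factor vanishes
    have hz1 : z ^ L = 1 := by
      rw [hzdef, ← zpow_natCast (ψ ^ _), ← zpow_mul, hone]
      exact ⟨-(τ' : ℤ), by ring⟩
    have hz2 : z ≠ 1 := by
      intro h
      rw [hzdef, hone] at h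
      obtain ⟨c, hc⟩ := h
      have h8 : (2:ℤ) * (-(τ':ℤ)) = 2 * ((L:ℤ) * c) := by linarith
      have h9 : -(τ':ℤ) = (L:ℤ) * c := mul_left_cancel₀ two_ne_zero h8
      have hLτ : (L : ℤ) ∣ (τ' : ℤ) := ⟨-c, by rw [mul_neg, ← h9, neg_neg]⟩
      exact hdvd (Int.ofNat_dvd.1 hLτ)
    rw [geom_zero L hz1 hz2, zero_mul]
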